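/- For a weighted graph with edge weights w_{ij} and edge lengths ℓ_{ij} induced by a layout, the sum over block sizes b^k (k ≥ 1) of the expected block-transition rates β(b^k) = (1/W) Σ_{ij} w_{ij} min(ℓ_{ij}/b^k, 1) equals (1/W) Σ_{ij} w_{ij} A(ℓ_{ij}), where A(ℓ) = ⌊log_b ℓ⌋ + ℓ b^{−⌊log_b ℓ⌋}/(b−1). -/
import Mathlib

lemma aux_summable (b : ℕ) (hb : 2 ≤ b) (ℓ : ℕ) :
    Summable (fun k : ℕ => min ((ℓ : ℝ) / (b : ℝ) ^ (k + 1)) 1) := by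
  have hB : (1:ℝ) < b := by exact_mod_cast Nat.one_lt_two.trans_le hb
  have hB0 : (0:ℝ) < b := by linarith
  have hsum : Summable (fun k : ℕ => (ℓ:ℝ) * ((b:ℝ)⁻¹)^(k+1)) := by
    have h := summable_geometric_of_lt_one (by positivity : (0:ℝ) ≤ (b:ℝ)⁻¹)
      (by rw [inv_lt_one_iff₀]; right; exact hB)
    simpa [pow_succ, mul_comm, mul_assoc, mul_left_comm] using
      h.mul_left ((ℓ:ℝ) * (b:ℝ)⁻¹)
  apply Summable.of_nonneg_of_le (fun k => le_min (by positivity) one_pos.le) _ hsum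
  intro k
  calc min ((ℓ:ℝ)/(b:ℝ)^(k+1)) 1 ≤ (ℓ:ℝ)/(b:ℝ)^(k+1) := min_le_left _ _
  _ = (ℓ:ℝ) * ((b:ℝ)⁻¹)^(k+1) := by rw [div_eq_mul_inv, inv_pow]

lemma aux_tsum (b : ℕ) (hb : 2 ≤ b) (ℓ : ℕ) (hl : 1 ≤ ℓ) :
    ∑' k : ℕ, min ((ℓ:ℝ)/(b:ℝ)^(k+1)) 1
      = (Nat.log b ℓ : ℝ) + (ℓ:ℝ) * ((b:ℝ)^(Nat.log b ℓ))⁻¹ / ((b:ℝ)-1) := by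
  set m := Nat.log b ℓ with hm
  have hb1 : 1 < b := hb
  have hB : (1:ℝ) < b := by exact_mod_cast hb1
  have hB0 : (0:ℝ) < b := by linarith
  have hS := aux_summable b hb ℓ
  rw [← Summable.sum_add_tsum_nat_add m hS]
  have h1 : ∑ k ∈ Finset.range m, min ((ℓ:ℝ)/(b:ℝ)^(k+1)) 1 = (m : ℝ) := by
    rw [Finset.sum_congr rfl (fun k hk => ?_), Finset.sum_const, Finset.card_range,
      nsmul_eq_mul, mul_one]
    have hkm : k + 1 ≤ m := Finset.mem_range.mp hk
    have h2 : (b:ℕ)^(k+1) ≤ ℓ :=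
      le_trans (Nat.pow_le_pow_right (by omega) hkm) (Nat.pow_log_le_self b (by omega))
    have h3 : ((b:ℝ))^(k+1) ≤ (ℓ:ℝ) := by exact_mod_cast h2
    rw [min_eq_right]
    rw [le_div_iff₀ (by positivity), one_mul]
    exact h3
  have h2 : ∀ k : ℕ, min ((ℓ:ℝ)/(b:ℝ)^(k + m + 1)) 1 = ((ℓ:ℝ)/(b:ℝ)^(m+1)) * ((b:ℝ)⁻¹)^k := by
    intro k
    have hlt : ℓ < b ^ (m + 1) := Nat.lt_pow_succ_log_self hb1 ℓ
    have hle : (b:ℕ) ^ (m+1) ≤ b ^ (k + m + 1) := Nat.pow_le_pow_right (by omega) (by omega)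
    have hlt' : (ℓ:ℝ) < (b:ℝ)^(k + m + 1) := by exact_mod_cast lt_of_lt_of_le hlt hle
    rw [min_eq_left (le_of_lt (by rw [div_lt_one (by positivity)]; exact hlt'))]
    rw [show k + m + 1 = k + (m + 1) from by ring, pow_add, ← div_div,
      div_eq_mul_inv (ℓ:ℝ), inv_pow, div_eq_mul_inv]
    ring
  rw [h1]
  congr 1
  rw [tsum_congr h2, tsum_mul_left,
    tsum_geometric_of_lt_one (by positivity) (by rw [inv_lt_one_iff₀]; right; exact hB)]
  have hb1' : (b:ℝ) - 1 ≠ 0 := by linarith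
  have hbm : (b:ℝ)^m ≠ 0 := by positivity
  field_simp
  ring

/-- For a weighted graph with edge weights w_i > 0 (total W) and edge
lengths ℓ_i ≥ 1 induced by a layout, the sum over block sizes b^k (k ≥ 1) of the
block-transition rates β(b^k) = (1/W) Σ_i w_i min(ℓ_i/b^k, 1) equals
(1/W) Σ_i w_i A(ℓ_i), where A(ℓ) = ⌊log_b ℓ⌋ + ℓ·b^{−⌊log_b ℓ⌋}/(b−1). -/
theorem sum_block_transitions {ι : Type*} [Fintype ι] (b : ℕ) (hb : 2 ≤ b)
    (w : ι → ℝ) (ℓ : ι → ℕ) (hw : ∀ i, 0 < w i) (hl : ∀ i, 1 ≤ ℓ i) :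
    ∑' k : ℕ, (1 / ∑ i, w i) * ∑ i, w i * min ((ℓ i : ℝ) / (b : ℝ) ^ (k + 1)) 1
      = (1 / ∑ i, w i) * ∑ i, w i *
          ((Nat.log b (ℓ i) : ℝ)
            + (ℓ i : ℝ) * ((b : ℝ) ^ (Nat.log b (ℓ i)))⁻¹ / ((b : ℝ) - 1)) := by
  rw [tsum_mul_left]
  congr 1
  rw [Summable.tsum_finsetSum (fun i _ => (aux_summable b hb (ℓ i)).mul_left (w i))]
  refine Finset.sum_congr rfl fun i _ => ?_
  rw [tsum_mul_left, aux_tsum b hb (ℓ i) (hl i)]
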